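/- For odd positive n, the minimal exponent of q appearing in the series Σ_{x_i ≡ i (mod n), Σx_i = 0} ∏_{i<j}(x_i - x_j) q^{(x_1²+...+x_n²)/(2n)} is (n²-1)/24, attained exactly at the tuple which is a permutation of {-(n-1)/2, ..., (n-1)/2}; in particular, every tuple of integers (x_1,...,x_n) with x_i ≡ i (mod n) and x_1 + ... + x_n = 0 satisfies x_1² + ... + x_n² ≥ n(n²-1)/12. -/
import Mathlib

lemma sqsum (k : ℕ) : 6 * ∑ i ∈ Finset.range k, ((i:ℤ))^2 = k*(k-1)*(2*k-1) := by
  induction k with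
  | zero => simp
  | succ k ih =>
    rw [Finset.sum_range_succ]
    push_cast
    push_cast at ih
    nlinarith [ih]

theorem stmt_14 (n : ℕ) (hn : Odd n) (hpos : 0 < n) (x : Fin n → ℤ)
    (hx : ∀ i : Fin n, x i ≡ (i : ℕ) + 1 [ZMOD n]) (hsum : ∑ i, x i = 0) :
    (n : ℤ) * ((n : ℤ) ^ 2 - 1) ≤ 12 * ∑ i, x i ^ 2 ∧
    (12 * ∑ i, x i ^ 2 = (n : ℤ) * ((n : ℤ) ^ 2 - 1) ↔
      Set.range x = Set.Icc (-(((n : ℤ) - 1) / 2)) (((n : ℤ) - 1) / 2)) := by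
  obtain ⟨m, hm⟩ := hn
  have hm' : n = 2 * m + 1 := by omega
  have hn' : (n : ℤ) = 2 * m + 1 := by exact_mod_cast congrArg (Nat.cast : ℕ → ℤ) hm'
  set c : Fin n → ℤ := fun i => if (i : ℤ) + 1 ≤ m then (i : ℤ) + 1 else (i : ℤ) + 1 - n with hc
  have hcb : ∀ i : Fin n, -(m:ℤ) ≤ c i ∧ c i ≤ m := by
    intro i
    have hi : (i : ℕ) < n := i.isLt
    have hi' : ((i : ℕ) : ℤ) < (n : ℤ) := by exact_mod_cast hi
    simp only [hc]
    split <;> omega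
  have hdvd : ∀ i : Fin n, (n : ℤ) ∣ x i - c i := by
    intro i
    obtain ⟨k, hk⟩ := (hx i).dvd
    simp only [hc]
    split
    · exact ⟨-k, by linarith [hk]⟩
    · exact ⟨-k + 1, by linarith [hk]⟩
  have key : ∀ i : Fin n, x i ≠ c i → c i ^ 2 < x i ^ 2 := by
    intro i hne
    obtain ⟨k, hk⟩ := hdvd i
    have hb := hcb i
    have hk0 : k ≠ 0 := by
      intro h; apply hne; rw [h, mul_zero] at hk; linarith
    rcases hk0.lt_or_gt with hkn | hkp
    · have h1 : k ≤ -1 := by omega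
      have h2 : x i ≤ -((m:ℤ) + 1) := by nlinarith [mul_nonneg (by positivity : (0:ℤ) ≤ 2*(m:ℤ)+1) (by linarith : (0:ℤ) ≤ -k - 1)]
      nlinarith [mul_nonneg (by linarith : (0:ℤ) ≤ (m:ℤ) - c i) (by linarith : (0:ℤ) ≤ (m:ℤ) + c i)]
    · have h1 : 1 ≤ k := by omega
      have h2 : ((m:ℤ) + 1) ≤ x i := by nlinarith [mul_nonneg (by positivity : (0:ℤ) ≤ 2*(m:ℤ)+1) (by linarith : (0:ℤ) ≤ k - 1)]
      nlinarith [mul_nonneg (by linarith : (0:ℤ) ≤ (m:ℤ) - c i) (by linarith : (0:ℤ) ≤ (m:ℤ) + c i)]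
  have hterm : ∀ i : Fin n, c i ^ 2 ≤ x i ^ 2 := by
    intro i
    rcases eq_or_ne (x i) (c i) with h | h
    · rw [h]
    · exact (key i h).le
  -- sum of c squares
  have hsumc : 12 * ∑ i, c i ^ 2 = (n : ℤ) * ((n : ℤ) ^ 2 - 1) := by
    have h1 : ∑ i, c i ^ 2 = ∑ i ∈ Finset.range n, (fun j : ℕ => (if (j : ℤ) + 1 ≤ m then (j : ℤ) + 1 else (j : ℤ) + 1 - n) ^ 2) i := by
      rw [Finset.sum_range fun j => _]
    rw [h1]
    rw [show Finset.range n = Finset.range (m + (m + 1)) from by rw [show n = m + (m + 1) from by omega], Finset.sum_range_add]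
    have e1 : ∀ i ∈ Finset.range m, (fun j : ℕ => (if (j : ℤ) + 1 ≤ m then (j : ℤ) + 1 else (j : ℤ) + 1 - n) ^ 2) i = ((i : ℤ) + 1) ^ 2 := by
      intro i hi
      simp only [Finset.mem_range] at hi
      have : ((i : ℕ) : ℤ) + 1 ≤ m := by exact_mod_cast hi
      simp [this]
    have e2 : ∀ i ∈ Finset.range (m + 1), (fun j : ℕ => (if (j : ℤ) + 1 ≤ m then (j : ℤ) + 1 else (j : ℤ) + 1 - n) ^ 2) (m + i) = ((m : ℤ) - i) ^ 2 := by
      intro i hi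
      simp only [Finset.mem_range] at hi
      have h3 : ¬ (((m + i : ℕ) : ℤ) + 1 ≤ m) := by push_cast; omega
      simp only [h3, if_false]
      push_cast [hn']
      ring
    rw [Finset.sum_congr rfl e1, Finset.sum_congr rfl e2]
    have g1 : ∑ i ∈ Finset.range m, ((i : ℤ) + 1) ^ 2 = ∑ i ∈ Finset.range (m+1), (i:ℤ)^2 := by
      rw [Finset.sum_range_succ' (fun i => (i:ℤ)^2) m]
      simp
    have g2 : ∑ i ∈ Finset.range (m+1), ((m : ℤ) - i) ^ 2 = ∑ i ∈ Finset.range (m+1), (i:ℤ)^2 := by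
      rw [← Finset.sum_range_reflect (fun i => (i:ℤ)^2) (m+1)]
      apply Finset.sum_congr rfl
      intro i hi
      simp only [Finset.mem_range] at hi
      push_cast [Nat.cast_sub (by omega : i ≤ m)]
      ring
    rw [g1, g2]
    have hs := sqsum (m + 1)
    push_cast at hs ⊢
    rw [hn']
    nlinarith [hs]
  have hle : ∑ i, c i ^ 2 ≤ ∑ i, x i ^ 2 := Finset.sum_le_sum fun i _ => hterm i
  have hhalf : (((n : ℤ) - 1) / 2) = (m : ℤ) := by omega
  have hrangec : Set.range c = Set.Icc (-(m:ℤ)) (m:ℤ) := by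
    ext v
    constructor
    · rintro ⟨i, rfl⟩
      exact ⟨(hcb i).1, (hcb i).2⟩
    · rintro ⟨h1, h2⟩
      have hcval : ∀ (t : ℕ) (h : t < n), c ⟨t, h⟩ = if (t:ℤ) + 1 ≤ m then (t:ℤ) + 1 else (t:ℤ) + 1 - n := fun t h => rfl
      rcases le_or_gt 1 v with hv | hv
      · refine ⟨⟨(v - 1).toNat, by omega⟩, ?_⟩
        rw [hcval]
        split <;> omega
      · refine ⟨⟨(v + 2 * m).toNat, by omega⟩, ?_⟩
        rw [hcval]
        split <;> omega
  constructor
  · linarith [hsumc, hle]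
  · rw [hhalf]
    constructor
    · intro heq
      have hsums : ∑ i, x i ^ 2 = ∑ i, c i ^ 2 := by linarith
      have hxc : x = c := by
        funext i
        by_contra hne
        have hlt : c i ^ 2 < x i ^ 2 := key i hne
        have : ∑ i, c i ^ 2 < ∑ i, x i ^ 2 :=
          Finset.sum_lt_sum (fun j _ => hterm j) ⟨i, Finset.mem_univ i, hlt⟩
        linarith
      rw [hxc, hrangec]
    · intro hr
      have hxc : ∀ i : Fin n, x i = c i := by
        intro i
        have h1 : x i ∈ Set.Icc (-(m:ℤ)) (m:ℤ) := hr ▸ Set.mem_range_self i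
        have h2 := hcb i
        have h3 := hdvd i
        have := Int.eq_zero_of_abs_lt_dvd h3 (by rw [hn', abs_lt]; exact ⟨by linarith [h1.1, h2.2], by linarith [h1.2, h2.1]⟩)
        omega
      have : ∑ i, x i ^ 2 = ∑ i, c i ^ 2 :=
        Finset.sum_congr rfl fun i _ => by rw [hxc i]
      rw [this, hsumc]
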